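/- Let (γ_n) be a sequence in ℂ with 0 < |γ_n| < 1 for all n and γ_n → 0. For each n let δ_n be the unique root of the kernel equation (in δ) with 0 < |δ_n| < |γ_n|, and let γ̂_n be the unique root of the kernel equation with δ = δ_n (in γ) satisfying 0 < |γ̂_n| < |δ_n|. Let w and ŵ be the two roots of the quadratic λ(a²+ā²)·w² − (1 − (λ̄(ā²+a²) + λaā))·w + λ̄āa = 0 with |w| < 1 < |ŵ|. Then δ_n/γ_n → w and γ̂_n/δ_n → 1/ŵ as n → ∞. -/

import Mathlib

/-- The kernel equation in (γ, δ) ∈ ℂ². -/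
def Kernel (a lam : ℝ) (g d : ℂ) : Prop :=
  (1 - ((1-(lam:ℂ))*((1-(a:ℂ))^2+(a:ℂ)^2) + (lam:ℂ)*(a:ℂ)*(1-(a:ℂ)))) * g * d
    = ((1-(lam:ℂ))*(1-(a:ℂ))*(a:ℂ)*g + (lam:ℂ)*((a:ℂ)^2+(1-(a:ℂ))^2)) * d^2
      + (lam:ℂ)*(1-(a:ℂ))*(a:ℂ)*d^3 + (1-(lam:ℂ))*(1-(a:ℂ))*(a:ℂ)*g^2

/-- limiting ratios of the compensation parameters: if γ_n → 0,
then δ_n/γ_n → w and γ̂_n/δ_n → 1/ŵ, where w, ŵ are the roots of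
λ(a²+ā²)w² − (1 − (λ̄(ā²+a²)+λaā))w + λ̄āa = 0 with |w| < 1 < |ŵ|. -/
theorem stmt11 (a lam : ℝ) (ha : 0 < a) (ha1 : a < 1) (hl : 0 < lam) (hl1 : lam < 1)
    (g d ghat : ℕ → ℂ)
    (hg : ∀ n, 0 < ‖g n‖ ∧ ‖g n‖ < 1)
    (hg0 : Filter.Tendsto g Filter.atTop (nhds 0))
    (hd : ∀ n, 0 < ‖d n‖ ∧ ‖d n‖ < ‖g n‖ ∧
      Kernel a lam (g n) (d n))
    (hdu : ∀ n, ∀ z : ℂ, 0 < ‖z‖ → ‖z‖ < ‖g n‖ →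
      Kernel a lam (g n) z → z = d n)
    (hghat : ∀ n, 0 < ‖ghat n‖ ∧
      ‖ghat n‖ < ‖d n‖ ∧ Kernel a lam (ghat n) (d n))
    (hghatu : ∀ n, ∀ z : ℂ, 0 < ‖z‖ → ‖z‖ < ‖d n‖ →
      Kernel a lam z (d n) → z = ghat n)
    (w what : ℂ)
    (hw : (lam:ℂ)*((a:ℂ)^2+(1-(a:ℂ))^2) * w^2
        - (1 - ((1-(lam:ℂ))*((1-(a:ℂ))^2+(a:ℂ)^2) + (lam:ℂ)*(a:ℂ)*(1-(a:ℂ)))) * w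
        + (1-(lam:ℂ))*(1-(a:ℂ))*(a:ℂ) = 0)
    (hwhat : (lam:ℂ)*((a:ℂ)^2+(1-(a:ℂ))^2) * what^2
        - (1 - ((1-(lam:ℂ))*((1-(a:ℂ))^2+(a:ℂ)^2) + (lam:ℂ)*(a:ℂ)*(1-(a:ℂ)))) * what
        + (1-(lam:ℂ))*(1-(a:ℂ))*(a:ℂ) = 0)
    (hw1 : ‖w‖ < 1) (hwhat1 : 1 < ‖what‖) :
    Filter.Tendsto (fun n => d n / g n) Filter.atTop (nhds w) ∧
    Filter.Tendsto (fun n => ghat n / d n) Filter.atTop (nhds (1 / what)) := by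
  obtain ⟨A, hAdef⟩ : ∃ x : ℂ, x = (lam:ℂ)*((a:ℂ)^2+(1-(a:ℂ))^2) := ⟨_, rfl⟩
  obtain ⟨B, hBdef⟩ : ∃ x : ℂ, x = (1-(lam:ℂ))*(1-(a:ℂ))*(a:ℂ) := ⟨_, rfl⟩
  obtain ⟨C, hCdef⟩ : ∃ x : ℂ,
    x = (1 - ((1-(lam:ℂ))*((1-(a:ℂ))^2+(a:ℂ)^2) + (lam:ℂ)*(a:ℂ)*(1-(a:ℂ)))) := ⟨_, rfl⟩
  obtain ⟨E, hEdef⟩ : ∃ x : ℂ, x = (lam:ℂ)*(1-(a:ℂ))*(a:ℂ) := ⟨_, rfl⟩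
  rw [← hAdef, ← hBdef, ← hCdef] at hw hwhat
  -- basic facts
  have hw1' : ‖w‖ < 1 := by simpa using hw1
  have hwhat1' : (1:ℝ) < ‖what‖ := by simpa using hwhat1
  have hArpos : (0:ℝ) < lam*(a^2+(1-a)^2) := by nlinarith [mul_pos ha ha, sq_nonneg (1-a)]
  have hAr : A = ((lam*(a^2+(1-a)^2) : ℝ) : ℂ) := by rw [hAdef]; push_cast; ring
  have hAne : A ≠ 0 := by rw [hAr]; exact_mod_cast hArpos.ne'
  have hApos : (0:ℝ) < ‖A‖ := norm_pos_iff.mpr hAne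
  -- relations between the coefficients and the roots
  have hne : w ≠ what := by
    intro h; rw [h] at hw1; linarith
  have h1 : C*(w - what) = A*(w+what)*(w-what) := by linear_combination hwhat - hw
  have hCeq : C = A*(w+what) := mul_right_cancel₀ (sub_ne_zero.mpr hne) h1
  have hBeq : B = A*(w*what) := by linear_combination hw + w*hCeq
  -- the general squeeze principle
  have main : ∀ (u : ℕ → ℂ) (t : ℂ) (K : ℝ), (∀ n, ‖u n - t‖ ≤ K * ‖g n‖) →
      Filter.Tendsto u Filter.atTop (nhds t) := by
    intro u t K hb
    rw [tendsto_iff_norm_sub_tendsto_zero]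
    have hK : Filter.Tendsto (fun n => K * ‖g n‖) Filter.atTop (nhds 0) := by
      simpa using (hg0.norm.const_mul K)
    exact squeeze_zero (fun n => norm_nonneg _) hb hK
  constructor
  · -- first limit
    apply main _ _ ((‖B‖+‖E‖)/(‖A‖*(‖what‖-1)))
    intro n
    have hgpos : (0:ℝ) < ‖g n‖ := by simpa using (hg n).1
    have hgne : g n ≠ 0 := norm_pos_iff.mp hgpos
    have hdg : ‖d n‖ < ‖g n‖ := by simpa using (hd n).2.1
    have hrlt : ‖d n / g n‖ < 1 := by
      rw [norm_div]; exact (div_lt_one hgpos).mpr hdg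
    have hker : C * g n * d n = (B*(g n) + A) * (d n)^2 + E*(d n)^3 + B*(g n)^2 := by
      rw [hAdef, hBdef, hCdef, hEdef]; exact (hd n).2.2
    have heq1 : A*(d n/g n)^2 - C*(d n/g n) + B
        = -(g n)*(d n/g n)^2*(B + E*(d n/g n)) := by
      field_simp
      linear_combination (-1) * hker
    have heq2 : A*((d n/g n - w)*(d n/g n - what))
        = (-(g n))*((d n/g n)^2*(B + E*(d n/g n))) := by
      linear_combination heq1 + (d n/g n)*hCeq - hBeq
    have hnb : ‖A‖*(‖d n/g n - w‖*‖d n/g n - what‖)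
        = ‖g n‖*(‖d n/g n‖^2*‖B + E*(d n/g n)‖) := by
      have h := congrArg (fun z : ℂ => ‖z‖) heq2
      simpa [norm_mul, norm_neg, norm_pow] using h
    have h3 : ‖B + E*(d n/g n)‖ ≤ ‖B‖ + ‖E‖ := by
      refine (norm_add_le _ _).trans ?_
      rw [norm_mul]
      have := mul_le_of_le_one_right (norm_nonneg E) hrlt.le
      linarith
    have h4 : ‖what‖ - 1 ≤ ‖d n/g n - what‖ := by
      rw [norm_sub_rev]
      calc ‖what‖ - 1 ≤ ‖what‖ - ‖d n/g n‖ := by linarith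
        _ ≤ ‖what - d n/g n‖ := norm_sub_norm_le _ _
    have hsq : ‖d n/g n‖^2 ≤ 1 := by nlinarith [norm_nonneg (d n/g n)]
    have step : ‖A‖*(‖d n/g n - w‖*(‖what‖-1)) ≤ ‖g n‖*(‖B‖+‖E‖) := by
      calc ‖A‖*(‖d n/g n - w‖*(‖what‖-1))
          ≤ ‖A‖*(‖d n/g n - w‖*‖d n/g n - what‖) := by gcongr
        _ = ‖g n‖*(‖d n/g n‖^2*‖B + E*(d n/g n)‖) := hnb
        _ ≤ ‖g n‖*(1*(‖B‖+‖E‖)) :=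
            mul_le_mul_of_nonneg_left
              (mul_le_mul hsq h3 (norm_nonneg _) zero_le_one) (norm_nonneg _)
        _ = ‖g n‖*(‖B‖+‖E‖) := by ring
    have hpos1 : (0:ℝ) < ‖A‖*(‖what‖-1) := mul_pos hApos (by linarith)
    rw [div_mul_eq_mul_div, le_div_iff₀ hpos1]
    calc ‖d n/g n - w‖*(‖A‖*(‖what‖-1)) = ‖A‖*(‖d n/g n - w‖*(‖what‖-1)) := by ring
      _ ≤ ‖g n‖*(‖B‖+‖E‖) := step
      _ = (‖B‖+‖E‖)*‖g n‖ := by ring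
  · -- second limit
    have hwhatne : what ≠ 0 := by
      intro h; rw [h] at hwhat1; simp at hwhat1; linarith
    have htend : Filter.Tendsto (fun n => what * (ghat n / d n)) Filter.atTop (nhds 1) := by
      apply main _ _ ((‖B‖+‖E‖)/(‖A‖*(1-‖w‖)))
      intro n
      have hdpos : (0:ℝ) < ‖d n‖ := by simpa using (hd n).1
      have hdne : d n ≠ 0 := norm_pos_iff.mp hdpos
      have hgd : ‖ghat n‖ < ‖d n‖ := by simpa using (hghat n).2.1
      have hdg : ‖d n‖ ≤ ‖g n‖ := le_of_lt (by simpa using (hd n).2.1)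
      have hslt : ‖ghat n / d n‖ < 1 := by
        rw [norm_div]; exact (div_lt_one hdpos).mpr hgd
      have hker : C * ghat n * d n = (B*(ghat n) + A) * (d n)^2 + E*(d n)^3 + B*(ghat n)^2 := by
        rw [hAdef, hBdef, hCdef, hEdef]; exact (hghat n).2.2
      have heq1 : B*(ghat n/d n)^2 - C*(ghat n/d n) + A
          = -(d n)*(B*(ghat n/d n) + E) := by
        field_simp
        linear_combination (-1) * hker
      have heq2 : A*((w*(ghat n/d n) - 1)*(what*(ghat n/d n) - 1))
          = (-(d n))*(B*(ghat n/d n) + E) := by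
        linear_combination heq1 - (ghat n/d n)^2*hBeq + (ghat n/d n)*hCeq
      have hnb : ‖A‖*(‖w*(ghat n/d n) - 1‖*‖what*(ghat n/d n) - 1‖)
          = ‖d n‖*‖B*(ghat n/d n) + E‖ := by
        have h := congrArg (fun z : ℂ => ‖z‖) heq2
        simpa [norm_mul, norm_neg] using h
      have h3 : ‖B*(ghat n/d n) + E‖ ≤ ‖B‖ + ‖E‖ := by
        refine (norm_add_le _ _).trans ?_
        rw [norm_mul]
        have := mul_le_of_le_one_right (norm_nonneg B) hslt.le
        linarith
      have hws : ‖w*(ghat n/d n)‖ ≤ ‖w‖ := by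
        rw [norm_mul]; exact mul_le_of_le_one_right (norm_nonneg w) hslt.le
      have h4 : 1 - ‖w‖ ≤ ‖w*(ghat n/d n) - 1‖ := by
        rw [norm_sub_rev]
        calc 1 - ‖w‖ ≤ 1 - ‖w*(ghat n/d n)‖ := by linarith
          _ ≤ ‖1 - w*(ghat n/d n)‖ := by
              simpa using norm_sub_norm_le (1:ℂ) (w*(ghat n/d n))
      have step : ‖A‖*(‖what*(ghat n/d n) - 1‖*(1-‖w‖)) ≤ ‖g n‖*(‖B‖+‖E‖) := by
        calc ‖A‖*(‖what*(ghat n/d n) - 1‖*(1-‖w‖))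
            ≤ ‖A‖*(‖what*(ghat n/d n) - 1‖*‖w*(ghat n/d n) - 1‖) := by gcongr
          _ = ‖A‖*(‖w*(ghat n/d n) - 1‖*‖what*(ghat n/d n) - 1‖) := by ring
          _ = ‖d n‖*‖B*(ghat n/d n) + E‖ := hnb
          _ ≤ ‖g n‖*(‖B‖+‖E‖) := mul_le_mul hdg h3 (norm_nonneg _) (norm_nonneg _)
      have hpos1 : (0:ℝ) < ‖A‖*(1-‖w‖) := mul_pos hApos (by linarith)
      rw [div_mul_eq_mul_div, le_div_iff₀ hpos1]
      calc ‖what*(ghat n/d n) - 1‖*(‖A‖*(1-‖w‖))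
          = ‖A‖*(‖what*(ghat n/d n) - 1‖*(1-‖w‖)) := by ring
        _ ≤ ‖g n‖*(‖B‖+‖E‖) := step
        _ = (‖B‖+‖E‖)*‖g n‖ := by ring
    have hfun : (fun n => ghat n / d n) = fun n => (what * (ghat n / d n)) * what⁻¹ := by
      funext n
      rw [mul_comm what (ghat n / d n), mul_assoc, mul_inv_cancel₀ hwhatne, mul_one]
    rw [hfun]
    have := htend.mul_const what⁻¹
    simpa [one_div] using this
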